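/- Let $t\in[0,\infty)$, $p\in(1,\infty)$, and let $x,\beta\colon[0,t]\to[0,\infty]$ be Borel-measurable functions which satisfy for all $s\in[0,t]$ that $(x_s)^p\le (x_0)^p + p\int_0^s (x_r)^{p-1}\beta_r\,dr < \infty$. Then $x_t \le x_0 + \int_0^t \beta_r\,dr$. -/

import Mathlib

open MeasureTheory Set
open scoped ENNReal NNReal

lemma gw_step_real {p ε δ a b c : ℝ} (hp : 1 < p) (hε : 0 < ε) (hδ : 0 < δ)
    (hδb : δ ≤ b) (hba : b ≤ a) (hc : 0 ≤ c)
    (h1 : a ^ p ≤ b ^ p + p * (a ^ (p-1) * c))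
    (h2 : a ^ p ≤ b ^ p + p * (ε * δ ^ p)) :
    a ≤ b + (1 + ε) ^ (p - 1) * c := by
  have hp0 : (0:ℝ) < p := lt_trans one_pos hp
  have hb : 0 < b := hδ.trans_le hδb
  have ha : 0 < a := hb.trans_le hba
  have hab0 : 0 ≤ a - b := sub_nonneg.2 hba
  have hBer : b ^ p + p * (b ^ (p-1) * (a - b)) ≤ a ^ p := by
    have h := one_add_mul_self_le_rpow_one_add (s := (a-b)/b)
      (by have := div_nonneg hab0 hb.le; linarith) hp.le
    have he : 1 + (a-b)/b = a / b := by field_simp; ring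
    rw [he] at h
    have hbp : (0:ℝ) < b ^ p := Real.rpow_pos_of_pos hb p
    have h' := mul_le_mul_of_nonneg_left h hbp.le
    calc b ^ p + p * (b ^ (p-1) * (a - b))
        = b ^ p * (1 + p * ((a-b)/b)) := by
          rw [Real.rpow_sub hb p 1, Real.rpow_one]; field_simp
      _ ≤ b ^ p * (a/b) ^ p := h'
      _ = a ^ p := by
          rw [Real.div_rpow ha.le hb.le]; field_simp
  have hbp1 : (0:ℝ) < b ^ (p-1) := Real.rpow_pos_of_pos hb _
  have hδp1 : (0:ℝ) < δ ^ (p-1) := Real.rpow_pos_of_pos hδ _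
  have hδbp : δ ^ (p-1) ≤ b ^ (p-1) := Real.rpow_le_rpow hδ.le hδb (by linarith)
  have key2 : b ^ (p-1) * (a - b) ≤ ε * δ ^ p := by nlinarith
  have hδsplit : δ ^ p = δ ^ (p-1) * δ := by
    have h' := Real.rpow_add hδ (p-1) 1
    rw [Real.rpow_one] at h'
    rw [← h']; congr 1; ring
  have hab2 : a - b ≤ ε * δ := by
    have h3 : δ ^ (p-1) * (a - b) ≤ ε * (δ ^ (p-1) * δ) := by
      calc δ ^ (p-1) * (a - b) ≤ b ^ (p-1) * (a - b) :=
            mul_le_mul_of_nonneg_right hδbp hab0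
        _ ≤ ε * δ ^ p := key2
        _ = ε * (δ ^ (p-1) * δ) := by rw [hδsplit]
    have h' : δ ^ (p-1) * (a - b) ≤ δ ^ (p-1) * (ε * δ) := by
      calc δ ^ (p-1) * (a-b) ≤ ε * (δ ^ (p-1) * δ) := h3
        _ = δ ^ (p-1) * (ε * δ) := by ring
    exact le_of_mul_le_mul_left h' hδp1
  have key1 : b ^ (p-1) * (a - b) ≤ a ^ (p-1) * c := by nlinarith
  have hdiv : a / b ≤ 1 + ε := (div_le_iff₀ hb).2 (by nlinarith)
  have hratio : (a / b) ^ (p-1) ≤ (1 + ε) ^ (p-1) :=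
    Real.rpow_le_rpow (by positivity) hdiv (by linarith)
  have hstep : a - b ≤ (a / b) ^ (p-1) * c := by
    rw [Real.div_rpow ha.le hb.le, div_mul_eq_mul_div, le_div_iff₀ hbp1]
    nlinarith
  have hfin : a - b ≤ (1 + ε) ^ (p-1) * c :=
    hstep.trans (mul_le_mul_of_nonneg_right hratio hc)
  linarith

/-- Nonlinear Gronwall-Bellman-Opial inequality (Lemma 2.2). -/
theorem stmt0 (t p : ℝ) (ht : 0 ≤ t) (hp : 1 < p)
    (x β : ℝ → ℝ≥0∞) (hx : Measurable x) (hβ : Measurable β)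
    (h : ∀ s ∈ Set.Icc (0:ℝ) t,
      x s ^ p ≤ x 0 ^ p + ENNReal.ofReal p * ∫⁻ r in Set.Ioc (0:ℝ) s, x r ^ (p - 1) * β r ∧
        x 0 ^ p + ENNReal.ofReal p * ∫⁻ r in Set.Ioc (0:ℝ) s, x r ^ (p - 1) * β r < ⊤) :
    x t ≤ x 0 + ∫⁻ r in Set.Ioc (0:ℝ) t, β r := by
  have hp0 : (0:ℝ) < p := lt_trans one_pos hp
  have hp1 : (0:ℝ) ≤ p - 1 := by linarith
  set f : ℝ → ℝ≥0∞ := fun r => x r ^ (p - 1) * β r with hfdef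
  set B : ℝ≥0∞ := ∫⁻ r in Set.Ioc (0:ℝ) t, β r with hBdef
  rcases eq_or_ne B ⊤ with hB | hB
  · rw [hB]; simp
  set Y : ℝ → ℝ≥0∞ := fun s => x 0 ^ p + ENNReal.ofReal p * ∫⁻ r in Set.Ioc (0:ℝ) s, f r
    with hYdef
  have hmain : ∀ s ∈ Set.Icc (0:ℝ) t, x s ^ p ≤ Y s := fun s hs => (h s hs).1
  have hYfin : ∀ s ∈ Set.Icc (0:ℝ) t, Y s ≠ ⊤ := fun s hs => (h s hs).2.ne
  have ht_mem : t ∈ Set.Icc (0:ℝ) t := ⟨ht, le_refl t⟩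
  have h0_mem : (0:ℝ) ∈ Set.Icc (0:ℝ) t := ⟨le_refl 0, ht⟩
  have hpne : ENNReal.ofReal p ≠ 0 := by
    simp [ENNReal.ofReal_eq_zero, not_le, hp0]
  have hIfin : (∫⁻ r in Set.Ioc (0:ℝ) t, f r) ≠ ⊤ := by
    intro htop
    apply hYfin t ht_mem
    rw [hYdef]
    simp [htop, ENNReal.mul_top hpne]
  -- monotonicity of Y
  have hYmono : ∀ s s' : ℝ, s ≤ s' → Y s ≤ Y s' := by
    intro s s' hss'
    exact add_le_add_right (mul_le_mul_right (lintegral_mono_set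
      (Set.Ioc_subset_Ioc_right hss')) _) _
  have hIfin' : ∀ s s' : ℝ, 0 ≤ s → s' ≤ t → (∫⁻ r in Set.Ioc s s', f r) ≠ ⊤ := by
    intro s s' h0s hs't
    exact ne_top_of_le_ne_top hIfin (lintegral_mono_set (Set.Ioc_subset_Ioc h0s hs't))
  have hBfin' : ∀ s s' : ℝ, 0 ≤ s → s' ≤ t → (∫⁻ r in Set.Ioc s s', β r) ≠ ⊤ := by
    intro s s' h0s hs't
    exact ne_top_of_le_ne_top hB (lintegral_mono_set (Set.Ioc_subset_Ioc h0s hs't))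
  have hx0fin : x 0 ≠ ⊤ := by
    intro h0
    apply hYfin 0 h0_mem
    rw [hYdef]
    simp [h0, ENNReal.top_rpow_of_pos hp0]
  have hxtfin : x t ≠ ⊤ := by
    intro h0
    have := hmain t ht_mem
    rw [h0, ENNReal.top_rpow_of_pos hp0] at this
    exact hYfin t ht_mem (top_le_iff.1 this)
  set u : ℝ → ℝ := fun s => (Y s).toReal with hudef
  have humono : ∀ s s' : ℝ, s ≤ s' → s' ∈ Set.Icc (0:ℝ) t → u s ≤ u s' := by
    intro s s' hss' hs'
    exact ENNReal.toReal_mono (hYfin s' hs') (hYmono s s' hss')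
  have hu_nonneg : ∀ s, 0 ≤ u s := fun s => ENNReal.toReal_nonneg
  -- additivity of the f-integral
  have hIadd : ∀ s s' : ℝ, 0 ≤ s → s ≤ s' →
      (∫⁻ r in Set.Ioc (0:ℝ) s', f r)
        = (∫⁻ r in Set.Ioc (0:ℝ) s, f r) + ∫⁻ r in Set.Ioc s s', f r := by
    intro s s' h0s hss'
    rw [← Set.Ioc_union_Ioc_eq_Ioc h0s hss', lintegral_union measurableSet_Ioc]
    rw [Set.Ioc_disjoint_Ioc]
    exact le_trans (min_le_left _ _) (le_max_right _ _)
  have hBadd : ∀ s s' : ℝ, 0 ≤ s → s ≤ s' →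
      (∫⁻ r in Set.Ioc (0:ℝ) s', β r)
        = (∫⁻ r in Set.Ioc (0:ℝ) s, β r) + ∫⁻ r in Set.Ioc s s', β r := by
    intro s s' h0s hss'
    rw [← Set.Ioc_union_Ioc_eq_Ioc h0s hss', lintegral_union measurableSet_Ioc]
    rw [Set.Ioc_disjoint_Ioc]
    exact le_trans (min_le_left _ _) (le_max_right _ _)
  have hYadd : ∀ s s' : ℝ, 0 ≤ s → s ≤ s' →
      Y s' = Y s + ENNReal.ofReal p * ∫⁻ r in Set.Ioc s s', f r := by
    intro s s' h0s hss'
    rw [hYdef]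
    simp only
    rw [hIadd s s' h0s hss', mul_add, add_assoc]
  -- the key one-step estimate
  have step : ∀ δ : ℝ, 0 < δ → ∀ ε : ℝ, 0 < ε → ∀ s s' : ℝ, 0 ≤ s → s ≤ s' → s' ≤ t →
      (∫⁻ r in Set.Ioc s s', f r) ≤ ENNReal.ofReal (ε * δ ^ p) →
      (δ ^ p + u s') ^ p⁻¹
        ≤ (δ ^ p + u s) ^ p⁻¹ + (1 + ε) ^ (p - 1) * (∫⁻ r in Set.Ioc s s', β r).toReal := by
    intro δ hδ ε hε s s' hs0 hss' hs't hsmall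
    have hs'mem : s' ∈ Set.Icc (0:ℝ) t := ⟨hs0.trans hss', hs't⟩
    have hsmem : s ∈ Set.Icc (0:ℝ) t := ⟨hs0, hss'.trans hs't⟩
    have hfin2 : (∫⁻ r in Set.Ioc s s', f r) ≠ ⊤ := hIfin' s s' hs0 hs't
    have hC2fin : (∫⁻ r in Set.Ioc s s', β r) ≠ ⊤ := hBfin' s s' hs0 hs't
    set W : ℝ≥0∞ := ENNReal.ofReal (δ ^ p) + Y s' with hWdef
    have hWfin : W ≠ ⊤ := by
      rw [hWdef]; exact ENNReal.add_ne_top.2 ⟨ENNReal.ofReal_ne_top, hYfin s' hs'mem⟩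
    have hWtoReal : W.toReal = δ ^ p + u s' := by
      rw [hWdef, ENNReal.toReal_add ENNReal.ofReal_ne_top (hYfin s' hs'mem),
        ENNReal.toReal_ofReal (by positivity)]
    have hxr : ∀ r ∈ Set.Ioc s s', x r ≤ W ^ p⁻¹ := by
      intro r hr
      have hrmem : r ∈ Set.Icc (0:ℝ) t := ⟨(hs0.trans_lt hr.1).le, hr.2.trans hs't⟩
      have h1 : x r ^ p ≤ Y s' := (hmain r hrmem).trans (hYmono r s' hr.2)
      calc x r = (x r ^ p) ^ p⁻¹ := (ENNReal.rpow_rpow_inv hp0.ne' _).symm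
        _ ≤ W ^ p⁻¹ := ENNReal.rpow_le_rpow (h1.trans le_add_self) (by positivity)
    have hI2bound : (∫⁻ r in Set.Ioc s s', f r)
        ≤ (W ^ p⁻¹) ^ (p - 1) * ∫⁻ r in Set.Ioc s s', β r := by
      calc (∫⁻ r in Set.Ioc s s', f r)
          ≤ ∫⁻ r in Set.Ioc s s', (W ^ p⁻¹) ^ (p - 1) * β r := by
            refine setLIntegral_mono (hβ.const_mul _) fun r hr => ?_
            exact mul_le_mul_left (ENNReal.rpow_le_rpow (hxr r hr) hp1) _
        _ = (W ^ p⁻¹) ^ (p - 1) * ∫⁻ r in Set.Ioc s s', β r :=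
            lintegral_const_mul _ hβ
    have husum : u s' = u s + p * (∫⁻ r in Set.Ioc s s', f r).toReal := by
      rw [hudef]
      simp only
      rw [hYadd s s' hs0 hss', ENNReal.toReal_add (hYfin s hsmem)
        (ENNReal.mul_ne_top ENNReal.ofReal_ne_top hfin2), ENNReal.toReal_mul,
        ENNReal.toReal_ofReal hp0.le]
    have ha_p : ((δ ^ p + u s') ^ p⁻¹) ^ p = δ ^ p + u s' :=
      Real.rpow_inv_rpow (by positivity) hp0.ne'
    have hb_p : ((δ ^ p + u s) ^ p⁻¹) ^ p = δ ^ p + u s :=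
      Real.rpow_inv_rpow (by positivity) hp0.ne'
    have hI2toReal : (∫⁻ r in Set.Ioc s s', f r).toReal
        ≤ ((δ ^ p + u s') ^ p⁻¹) ^ (p - 1) * (∫⁻ r in Set.Ioc s s', β r).toReal := by
      have h' := ENNReal.toReal_mono
        (ENNReal.mul_ne_top (ENNReal.rpow_ne_top_of_nonneg hp1
          (ENNReal.rpow_ne_top_of_nonneg (by positivity) hWfin)) hC2fin) hI2bound
      rwa [ENNReal.toReal_mul, ← ENNReal.toReal_rpow, ← ENNReal.toReal_rpow, hWtoReal] at h'
    have hI2small : (∫⁻ r in Set.Ioc s s', f r).toReal ≤ ε * δ ^ p := by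
      have h' := ENNReal.toReal_mono ENNReal.ofReal_ne_top hsmall
      rwa [ENNReal.toReal_ofReal (by positivity)] at h'
    have hba : (δ ^ p + u s) ^ p⁻¹ ≤ (δ ^ p + u s') ^ p⁻¹ :=
      Real.rpow_le_rpow (by positivity)
        (by have := humono s s' hss' hs'mem; linarith) (by positivity)
    have hδb : δ ≤ (δ ^ p + u s) ^ p⁻¹ := by
      have h' := Real.rpow_le_rpow (by positivity)
        (le_add_of_nonneg_right (hu_nonneg s) : δ ^ p ≤ δ ^ p + u s) (by positivity : (0:ℝ) ≤ p⁻¹)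
      rwa [Real.rpow_rpow_inv hδ.le hp0.ne'] at h'
    refine gw_step_real hp hε hδ hδb hba ENNReal.toReal_nonneg ?_ ?_
    · rw [ha_p, hb_p]
      have h' := mul_le_mul_of_nonneg_left hI2toReal hp0.le
      linarith [husum]
    · rw [ha_p, hb_p]
      have h' := mul_le_mul_of_nonneg_left hI2small hp0.le
      linarith [husum]
  -- main quantitative bound
  have main : ∀ δ : ℝ, 0 < δ → ∀ ε : ℝ, 0 < ε →
      (x t).toReal ≤ (x 0).toReal + δ + (1 + ε) ^ (p - 1) * B.toReal := by
    intro δ hδ ε hε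
    -- absolute continuity
    obtain ⟨η, hη0, hη⟩ := exists_pos_setLIntegral_lt_of_measure_lt
      (μ := volume.restrict (Set.Ioc (0:ℝ) t)) (f := f) hIfin
      (ε := ENNReal.ofReal (ε * δ ^ p)) (by positivity)
    obtain ⟨η', hη'pos, hη'⟩ : ∃ η' : ℝ, 0 < η' ∧ ENNReal.ofReal η' < η := by
      rcases eq_or_ne η ⊤ with rfl | hηtop
      · exact ⟨1, one_pos, by simp⟩
      · refine ⟨η.toReal / 2, by
          have := ENNReal.toReal_pos hη0.ne' hηtop; positivity, ?_⟩
        calc ENNReal.ofReal (η.toReal / 2) < ENNReal.ofReal η.toReal := by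
              rw [ENNReal.ofReal_lt_ofReal_iff (ENNReal.toReal_pos hη0.ne' hηtop)]
              have := ENNReal.toReal_pos hη0.ne' hηtop
              linarith
          _ = η := ENNReal.ofReal_toReal hηtop
    obtain ⟨n, hn⟩ := exists_nat_gt (t / η')
    have hn0 : 0 < (n:ℝ) := lt_of_le_of_lt (div_nonneg ht hη'pos.le) hn
    have hnne : (n:ℝ) ≠ 0 := hn0.ne'
    have htn : t / n ≤ η' := by
      rw [div_le_iff₀ hn0]
      have hle := hn.le
      calc t = (t / η') * η' := by field_simp
        _ ≤ η' * n := by nlinarith [hη'pos]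
    set σ : ℕ → ℝ := fun i => (i : ℝ) * (t / n) with hσdef
    have hσ0 : σ 0 = 0 := by simp [hσdef]
    have hσn : σ n = t := by rw [hσdef]; field_simp
    have hσnonneg : ∀ i, 0 ≤ σ i := fun i => by
      rw [hσdef]; positivity
    have hσmono : ∀ i : ℕ, σ i ≤ σ (i+1) := by
      intro i
      rw [hσdef]
      have : (0:ℝ) ≤ t / n := by positivity
      push_cast
      nlinarith
    have hσle : ∀ i : ℕ, i ≤ n → σ i ≤ t := by
      intro i hi
      rw [hσdef]
      calc (i:ℝ) * (t/n) ≤ n * (t/n) := by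
            have : (i:ℝ) ≤ n := by exact_mod_cast hi
            have h2 : (0:ℝ) ≤ t / n := by positivity
            nlinarith
        _ = t := by field_simp
    have hσdiff : ∀ i : ℕ, σ (i+1) - σ i = t / n := by
      intro i; rw [hσdef]; push_cast; ring
    have hsmall : ∀ i : ℕ, i + 1 ≤ n →
        (∫⁻ r in Set.Ioc (σ i) (σ (i+1)), f r) ≤ ENNReal.ofReal (ε * δ ^ p) := by
      intro i hi
      have hsub : Set.Ioc (σ i) (σ (i+1)) ⊆ Set.Ioc (0:ℝ) t :=
        Set.Ioc_subset_Ioc (hσnonneg i) (hσle (i+1) hi)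
      have hmeas : (volume.restrict (Set.Ioc (0:ℝ) t)) (Set.Ioc (σ i) (σ (i+1))) < η := by
        rw [Measure.restrict_apply' measurableSet_Ioc]
        calc volume (Set.Ioc (σ i) (σ (i+1)) ∩ Set.Ioc 0 t)
            ≤ volume (Set.Ioc (σ i) (σ (i+1))) := measure_mono Set.inter_subset_left
          _ = ENNReal.ofReal (σ (i+1) - σ i) := by rw [Real.volume_Ioc]
          _ ≤ ENNReal.ofReal η' := by
              rw [hσdiff i]; exact ENNReal.ofReal_le_ofReal htn
          _ < η := hη'
      have h' := (hη _ hmeas).le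
      rwa [Measure.restrict_restrict measurableSet_Ioc,
        Set.inter_eq_self_of_subset_left hsub] at h'
    have hind : ∀ i : ℕ, i ≤ n →
        (δ ^ p + u (σ i)) ^ p⁻¹
          ≤ (δ ^ p + u 0) ^ p⁻¹
            + (1 + ε) ^ (p - 1) * (∫⁻ r in Set.Ioc (0:ℝ) (σ i), β r).toReal := by
      intro i
      induction i with
      | zero =>
        intro _
        simp [hσ0]
      | succ i ih =>
        intro hi1
        have hi : i ≤ n := Nat.le_of_succ_le hi1
        have h1 := ih hi
        have h2 := step δ hδ ε hε (σ i) (σ (i+1)) (hσnonneg i) (hσmono i)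
          (hσle (i+1) hi1) (hsmall i hi1)
        have hadd : (∫⁻ r in Set.Ioc (0:ℝ) (σ (i+1)), β r).toReal
            = (∫⁻ r in Set.Ioc (0:ℝ) (σ i), β r).toReal
              + (∫⁻ r in Set.Ioc (σ i) (σ (i+1)), β r).toReal := by
          rw [hBadd (σ i) (σ (i+1)) (hσnonneg i) (hσmono i),
            ENNReal.toReal_add (hBfin' 0 (σ i) le_rfl (hσle i hi))
              (hBfin' (σ i) (σ (i+1)) (hσnonneg i) (hσle (i+1) hi1))]
        rw [hadd]
        have hpos : (0:ℝ) ≤ (1 + ε) ^ (p - 1) := by positivity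
        nlinarith [ENNReal.toReal_nonneg
          (a := ∫⁻ r in Set.Ioc (σ i) (σ (i+1)), β r)]
    have hzt := hind n le_rfl
    rw [hσn] at hzt
    have hu0 : u 0 = (x 0).toReal ^ p := by
      have hY0 : Y 0 = x 0 ^ p := by
        rw [hYdef]; simp
      rw [hudef]
      simp only
      rw [hY0, ENNReal.toReal_rpow]
    have h5 : (x t).toReal ^ p ≤ u t := by
      rw [ENNReal.toReal_rpow]
      exact ENNReal.toReal_mono (hYfin t ht_mem) (hmain t ht_mem)
    have h6 : (x t).toReal ≤ (δ ^ p + u t) ^ p⁻¹ := by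
      have h' := Real.rpow_le_rpow (by positivity)
        (h5.trans (le_add_of_nonneg_left (by positivity : (0:ℝ) ≤ δ ^ p)))
        (by positivity : (0:ℝ) ≤ p⁻¹)
      rwa [Real.rpow_rpow_inv ENNReal.toReal_nonneg hp0.ne'] at h'
    have hz0 : (δ ^ p + u 0) ^ p⁻¹ ≤ δ + (x 0).toReal := by
      rw [hu0]
      have hx0' : (0:ℝ) ≤ (x 0).toReal := ENNReal.toReal_nonneg
      have e1 : ∀ v : ℝ, 0 ≤ v → v ^ p = v ^ (p-1) * v := by
        intro v hv
        have h' := Real.rpow_add' hv (show p - 1 + 1 ≠ 0 by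
          have : p - 1 + 1 = p := by ring
          rw [this]; exact hp0.ne')
        rw [Real.rpow_one] at h'
        have hpp : p - 1 + 1 = p := by ring
        rw [hpp] at h'
        exact h'
      have hsum : δ ^ p + (x 0).toReal ^ p ≤ (δ + (x 0).toReal) ^ p := by
        have hb1 : δ ^ (p-1) ≤ (δ + (x 0).toReal) ^ (p-1) :=
          Real.rpow_le_rpow hδ.le (by linarith) hp1
        have hb2 : (x 0).toReal ^ (p-1) ≤ (δ + (x 0).toReal) ^ (p-1) :=
          Real.rpow_le_rpow hx0' (by linarith) hp1
        calc δ ^ p + (x 0).toReal ^ p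
            = δ ^ (p-1) * δ + (x 0).toReal ^ (p-1) * (x 0).toReal := by
              rw [e1 δ hδ.le, e1 _ hx0']
          _ ≤ (δ + (x 0).toReal) ^ (p-1) * δ + (δ + (x 0).toReal) ^ (p-1) * (x 0).toReal := by
              have := mul_le_mul_of_nonneg_right hb1 hδ.le
              have := mul_le_mul_of_nonneg_right hb2 hx0'
              linarith
          _ = (δ + (x 0).toReal) ^ (p-1) * (δ + (x 0).toReal) := by ring
          _ = (δ + (x 0).toReal) ^ p := (e1 _ (by positivity)).symm
      have h' := Real.rpow_le_rpow (by positivity) hsum (by positivity : (0:ℝ) ≤ p⁻¹)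
      rwa [Real.rpow_rpow_inv (by positivity) hp0.ne'] at h'
    calc (x t).toReal ≤ (δ ^ p + u t) ^ p⁻¹ := h6
      _ ≤ (δ ^ p + u 0) ^ p⁻¹ + (1 + ε) ^ (p - 1) * B.toReal := hzt
      _ ≤ (x 0).toReal + δ + (1 + ε) ^ (p - 1) * B.toReal := by
          have := hz0; linarith
  -- pass to the limit ε → 0
  have main2 : ∀ δ : ℝ, 0 < δ → (x t).toReal ≤ (x 0).toReal + δ + B.toReal := by
    intro δ hδ
    have hcont : Filter.Tendsto (fun ε : ℝ => (x 0).toReal + δ + (1 + ε) ^ (p - 1) * B.toReal)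
        (nhdsWithin 0 (Set.Ioi 0)) (nhds ((x 0).toReal + δ + B.toReal)) := by
      have h1 : Filter.Tendsto (fun ε : ℝ => (1 + ε) ^ (p - 1)) (nhds 0) (nhds 1) := by
        have h2 : Filter.Tendsto (fun ε : ℝ => 1 + ε) (nhds 0) (nhds 1) := by
          have h2' : Filter.Tendsto (fun ε : ℝ => 1 + ε) (nhds 0) (nhds (1 + 0)) :=
            Filter.Tendsto.add tendsto_const_nhds Filter.tendsto_id
          simpa using h2'
        have h3 : ContinuousAt (fun y : ℝ => y ^ (p - 1)) 1 :=
          Real.continuousAt_rpow_const 1 (p-1) (Or.inl one_ne_zero)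
        have := h3.tendsto.comp h2
        simpa [Real.one_rpow, Function.comp_def] using this
      have h4 : Filter.Tendsto (fun ε : ℝ => (x 0).toReal + δ + (1 + ε) ^ (p - 1) * B.toReal)
          (nhds 0) (nhds ((x 0).toReal + δ + 1 * B.toReal)) :=
        Filter.Tendsto.add tendsto_const_nhds (h1.mul tendsto_const_nhds)
      rw [one_mul] at h4
      exact h4.mono_left nhdsWithin_le_nhds
    refine ge_of_tendsto hcont ?_
    filter_upwards [self_mem_nhdsWithin] with ε hε
    exact main δ hδ ε hε
  have main3 : (x t).toReal ≤ (x 0).toReal + B.toReal := by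
    have h' : ∀ δ : ℝ, 0 < δ → (x t).toReal ≤ ((x 0).toReal + B.toReal) + δ := by
      intro δ hδ
      have := main2 δ hδ
      linarith
    exact le_of_forall_pos_le_add h'
  rw [← ENNReal.ofReal_toReal hxtfin, ← ENNReal.ofReal_toReal hx0fin,
    ← ENNReal.ofReal_toReal hB, ← ENNReal.ofReal_add ENNReal.toReal_nonneg ENNReal.toReal_nonneg]
  exact ENNReal.ofReal_le_ofReal main3
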